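/- Let a ≥ 1 and let Z(x,ℏ) = 1 + ∑_{k≥1} x^{ak}/(k! a^k ℏ^k) · ∏_{j=1}^{ak-1} 1/(1-jℏ), viewed as a formal power series in x with coefficients in the field of formal Laurent series ℚ((ℏ)). Then Z satisfies the differential equation [x^{a-1} + ∏_{j=0}^{a-1}(1 + x·ŷ + jℏ) · ŷ] Z = 0, where ŷ = -ℏ ∂/∂x acts by differentiation in x and x acts by multiplication, and the operator product is composition of operators. -/

import Mathlib

open PowerSeries

/-- The formal variable `ℏ`, as a Laurent series over `ℚ`. -/
noncomputable def hbar : LaurentSeries ℚ := HahnSeries.single 1 1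

/-- The wave function `Z(x,ℏ) = 1 + ∑_{k≥1} x^{ak}/(k! a^k ℏ^k) ∏_{j=1}^{ak-1} 1/(1-jℏ)`,
as a formal power series in `x` with coefficients in `ℚ((ℏ))`. -/
noncomputable def waveFunction (a : ℕ) : PowerSeries (LaurentSeries ℚ) :=
  PowerSeries.mk fun n =>
    if n = 0 then 1
    else if a ∣ n then
      (((n / a).factorial : LaurentSeries ℚ) * (a : LaurentSeries ℚ) ^ (n / a) *
          hbar ^ (n / a))⁻¹ *
        ∏ j ∈ Finset.range (n - 1), (1 - ((j : LaurentSeries ℚ) + 1) * hbar)⁻¹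
    else 0

/-- The operator `ŷ = -ℏ ∂/∂x` acting on `ℚ((ℏ))[[x]]`. -/
noncomputable def yhat (f : PowerSeries (LaurentSeries ℚ)) : PowerSeries (LaurentSeries ℚ) :=
  -(PowerSeries.C hbar) * f.derivativeFun

/-- The operator `1 + x·ŷ + jℏ` acting on `ℚ((ℏ))[[x]]`. -/
noncomputable def opFactor (j : ℕ) (f : PowerSeries (LaurentSeries ℚ)) :
    PowerSeries (LaurentSeries ℚ) :=
  f + PowerSeries.X * yhat f + PowerSeries.C ((j : LaurentSeries ℚ) * hbar) * f

/- ======================= auxiliary lemmas ======================= -/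

lemma hbar_ne_zero : hbar ≠ 0 := HahnSeries.single_ne_zero one_ne_zero

lemma one_add_C_mul_hbar_ne (q : ℚ) : (1 : LaurentSeries ℚ) + HahnSeries.C q * hbar ≠ 0 := by
  intro h
  have := congrArg (fun f => HahnSeries.coeff f 0) h
  rw [hbar, HahnSeries.C_apply, HahnSeries.single_mul_single] at this
  simp [HahnSeries.coeff_single] at this

lemma natCast_eq_C (m : ℕ) : ((m : ℕ) : LaurentSeries ℚ) = HahnSeries.C (m : ℚ) :=
  (map_natCast (HahnSeries.C : ℚ →+* LaurentSeries ℚ) m).symm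

lemma natCast_ne_zero' {m : ℕ} (h : m ≠ 0) : ((m : ℕ) : LaurentSeries ℚ) ≠ 0 := by
  rw [natCast_eq_C]
  intro h0
  have : (m : ℚ) = 0 := HahnSeries.C_injective (h0.trans (map_zero _).symm)
  exact h (by exact_mod_cast this)

lemma one_sub_natCast_mul_hbar_ne (m : ℕ) :
    (1 : LaurentSeries ℚ) - (m : LaurentSeries ℚ) * hbar ≠ 0 := by
  have h := one_add_C_mul_hbar_ne (-(m : ℚ))
  rwa [map_neg, ← natCast_eq_C, neg_mul, ← sub_eq_add_neg] at h

/-- The product `P m = ∏_{j<m} (1-(j+1)ℏ)`. -/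
noncomputable def P (m : ℕ) : LaurentSeries ℚ :=
  ∏ j ∈ Finset.range m, (1 - ((j : LaurentSeries ℚ) + 1) * hbar)

lemma P_factor (j : ℕ) :
    (1 : LaurentSeries ℚ) - ((j : LaurentSeries ℚ) + 1) * hbar
      = 1 - ((j + 1 : ℕ) : LaurentSeries ℚ) * hbar := by push_cast; ring

lemma P_ne_zero (m : ℕ) : P m ≠ 0 := by
  refine Finset.prod_ne_zero_iff.2 fun j _ => ?_
  rw [P_factor]
  exact one_sub_natCast_mul_hbar_ne _

lemma R_ne_zero (a m : ℕ) :
    (∏ i ∈ Finset.range a, ((1 : LaurentSeries ℚ) - ((m + i : ℕ) : LaurentSeries ℚ) * hbar)) ≠ 0 :=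
  Finset.prod_ne_zero_iff.2 fun j _ => one_sub_natCast_mul_hbar_ne _

/- coefficients of the operators -/

lemma coeff_yhat (f : PowerSeries (LaurentSeries ℚ)) (n : ℕ) :
    PowerSeries.coeff n (yhat f)
      = -(hbar * ((n : LaurentSeries ℚ) + 1)) * PowerSeries.coeff (n + 1) f := by
  rw [yhat, show -(PowerSeries.C hbar) * f.derivativeFun
      = PowerSeries.C hbar * (-f.derivativeFun) by ring,
    PowerSeries.coeff_C_mul, map_neg, (show PowerSeries.coeff n f.derivativeFun = PowerSeries.coeff (n + 1) f * (n + 1) from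
      PowerSeries.coeff_derivative f n)]
  push_cast
  ring

lemma coeff_opFactor (j n : ℕ) (f : PowerSeries (LaurentSeries ℚ)) :
    PowerSeries.coeff n (opFactor j f)
      = (1 + ((j : LaurentSeries ℚ) - (n : LaurentSeries ℚ)) * hbar)
          * PowerSeries.coeff n f := by
  rcases n with _ | m
  · simp only [opFactor, map_add, PowerSeries.coeff_zero_X_mul, PowerSeries.coeff_C_mul]
    push_cast
    ring
  · rw [opFactor, map_add, map_add, PowerSeries.coeff_succ_X_mul, coeff_yhat,
      PowerSeries.coeff_C_mul]
    push_cast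
    ring

lemma coeff_foldr (l : List ℕ) (n : ℕ) (f : PowerSeries (LaurentSeries ℚ)) :
    PowerSeries.coeff n ((l.foldr (fun j g => opFactor j ∘ g) id) f)
      = (l.map (fun j : ℕ => 1 + ((j : LaurentSeries ℚ) - (n : LaurentSeries ℚ)) * hbar)).prod
          * PowerSeries.coeff n f := by
  induction l with
  | nil => simp
  | cons j l ih =>
      have h : ((j :: l).foldr (fun j g => opFactor j ∘ g) id) f
          = opFactor j ((l.foldr (fun j g => opFactor j ∘ g) id) f) := rfl
      rw [h, coeff_opFactor, ih, List.map_cons, List.prod_cons]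
      ring

/- coefficients of Z -/

lemma coeff_Z (a : ℕ) (ha : 1 ≤ a) (k : ℕ) :
    PowerSeries.coeff (a * k) (waveFunction a)
      = (((k.factorial : LaurentSeries ℚ) * (a : LaurentSeries ℚ) ^ k * hbar ^ k))⁻¹
          * (P (a * k - 1))⁻¹ := by
  rcases k with _ | k
  · simp [waveFunction, P]
  · have hne : a * (k + 1) ≠ 0 := by positivity
    have hdvd : a ∣ a * (k + 1) := Dvd.intro _ rfl
    have hdiv : a * (k + 1) / a = k + 1 := Nat.mul_div_cancel_left _ (by omega)
    rw [waveFunction, PowerSeries.coeff_mk, if_neg hne, if_pos hdvd, hdiv, P,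
      ← Finset.prod_inv_distrib]

lemma coeff_Z_not_dvd (a n : ℕ) (h : ¬ a ∣ n) :
    PowerSeries.coeff n (waveFunction a) = 0 := by
  have hn : n ≠ 0 := by rintro rfl; exact h (dvd_zero a)
  simp [waveFunction, PowerSeries.coeff_mk, hn, h]

/- product identities -/

lemma P_split (a k : ℕ) (ha : 1 ≤ a) :
    P (a * (k + 1) - 1)
      = P (a * k - 1) *
          ∏ i ∈ Finset.range a,
            ((1 : LaurentSeries ℚ) - ((a * k + i : ℕ) : LaurentSeries ℚ) * hbar) := by
  rcases k with _ | k
  · obtain ⟨m, rfl⟩ : ∃ m, a = m + 1 := ⟨a - 1, by omega⟩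
    simp only [Nat.mul_zero, Nat.zero_sub, Nat.mul_one, Nat.zero_add, P, Finset.range_zero,
      Finset.prod_empty, one_mul]
    rw [Finset.prod_range_succ' (fun i => (1 : LaurentSeries ℚ) - ((i : ℕ) : LaurentSeries ℚ) * hbar) m]
    simp only [Nat.cast_zero, zero_mul, sub_zero, mul_one]
    refine Finset.prod_congr rfl fun j _ => ?_
    push_cast
    ring
  · set M := a * (k + 1) with hM
    have hM1 : 1 ≤ M := by
      have : a ≤ M := Nat.le_mul_of_pos_right a (by omega)
      omega
    have h1 : a * (k + 2) = M + a := by rw [hM]; ring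
    have h2 : a * (k + 2) - 1 = (M - 1) + a := by omega
    rw [h2, P, Finset.prod_range_add, ← P]
    congr 1
    refine Finset.prod_congr rfl fun i _ => ?_
    have : ((M - 1 + i : ℕ) : LaurentSeries ℚ) + 1 = ((M + i : ℕ) : LaurentSeries ℚ) := by
      rw [← Nat.cast_add_one]
      congr 1
      omega
    rw [this]

lemma Q_eq (a k : ℕ) (ha : 1 ≤ a) :
    (∏ j ∈ Finset.range a,
        ((1 : LaurentSeries ℚ)
          + ((j : LaurentSeries ℚ) - ((a * (k + 1) - 1 : ℕ) : LaurentSeries ℚ)) * hbar))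
      = ∏ i ∈ Finset.range a,
          ((1 : LaurentSeries ℚ) - ((a * k + i : ℕ) : LaurentSeries ℚ) * hbar) := by
  rw [← Finset.prod_range_reflect
    (fun i => (1 : LaurentSeries ℚ) - ((a * k + i : ℕ) : LaurentSeries ℚ) * hbar) a]
  refine Finset.prod_congr rfl fun j hj => ?_
  have hj' : j < a := Finset.mem_range.1 hj
  set M := a * (k + 1) with hM
  have h1 : M = a * k + a := by rw [hM]; ring
  have hle : j ≤ M - 1 := by omega
  have h2 : a * k + (a - 1 - j) = (M - 1) - j := by omega
  rw [h2, Nat.cast_sub hle]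
  ring

/- ======================= main theorem ======================= -/

set_option maxHeartbeats 1000000 in
theorem quantum_curve (a : ℕ) (ha : 1 ≤ a) :
    PowerSeries.X ^ (a - 1) * waveFunction a +
      ((List.range a).foldr (fun j g => opFactor j ∘ g) id) (yhat (waveFunction a)) = 0 := by
  refine PowerSeries.ext fun n => ?_
  rw [map_add, map_zero, PowerSeries.coeff_X_pow_mul', coeff_foldr, coeff_yhat]
  have hconv : ((List.range a).map
        (fun j : ℕ => 1 + ((j : LaurentSeries ℚ) - (n : LaurentSeries ℚ)) * hbar)).prod
      = ∏ j ∈ Finset.range a,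
          (1 + ((j : LaurentSeries ℚ) - (n : LaurentSeries ℚ)) * hbar) := rfl
  rw [hconv]
  by_cases hdvd : a ∣ (n + 1)
  · obtain ⟨k, hk⟩ := hdvd
    obtain ⟨k', rfl⟩ : ∃ k', k = k' + 1 := ⟨k - 1, by rcases k with _ | k <;> omega⟩
    have hMa : a * (k' + 1) = a * k' + a := by ring
    have hn : n = a * (k' + 1) - 1 := by omega
    subst hn
    have hle : a - 1 ≤ a * (k' + 1) - 1 := by omega
    rw [if_pos hle]
    have h1 : a * (k' + 1) - 1 - (a - 1) = a * k' := by omega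
    have h2 : a * (k' + 1) - 1 + 1 = a * (k' + 1) := by omega
    rw [h1, h2, coeff_Z a ha k', coeff_Z a ha (k' + 1), Q_eq a k' ha, P_split a k' ha]
    have h3 : ((a * (k' + 1) - 1 : ℕ) : LaurentSeries ℚ) + 1
        = (a : LaurentSeries ℚ) * ((k' : LaurentSeries ℚ) + 1) := by
      rw [← Nat.cast_add_one, h2]
      push_cast
      ring
    rw [h3]
    have hF : ((k'.factorial : ℕ) : LaurentSeries ℚ) ≠ 0 :=
      natCast_ne_zero' k'.factorial_ne_zero
    have hF' : (((k' + 1).factorial : ℕ) : LaurentSeries ℚ) ≠ 0 :=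
      natCast_ne_zero' (k' + 1).factorial_ne_zero
    have hA : ((a : ℕ) : LaurentSeries ℚ) ≠ 0 := natCast_ne_zero' (by omega)
    have hP1 : P (a * k' - 1) ≠ 0 := P_ne_zero _
    have hR : (∏ i ∈ Finset.range a,
        ((1 : LaurentSeries ℚ) - ((a * k' + i : ℕ) : LaurentSeries ℚ) * hbar)) ≠ 0 :=
      R_ne_zero a (a * k')
    have hfac : (((k' + 1).factorial : ℕ) : LaurentSeries ℚ)
        = ((k' : LaurentSeries ℚ) + 1) * ((k'.factorial : ℕ) : LaurentSeries ℚ) := by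
      rw [Nat.factorial_succ]
      push_cast
      ring
    set R := ∏ i ∈ Finset.range a,
        ((1 : LaurentSeries ℚ) - ((a * k' + i : ℕ) : LaurentSeries ℚ) * hbar) with hRdef
    set P1 := P (a * k' - 1) with hP1def
    have hh : hbar ≠ 0 := hbar_ne_zero
    have hk1 : ((k' : LaurentSeries ℚ) + 1) ≠ 0 := by
      rw [← Nat.cast_add_one]; exact natCast_ne_zero' (by omega)
    field_simp
    rw [hfac]
    have hden1 : (((k'.factorial : ℕ) : LaurentSeries ℚ) * ((a : ℕ) : LaurentSeries ℚ) ^ k'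
        * hbar ^ k' * P1) ≠ 0 :=
      mul_ne_zero (mul_ne_zero (mul_ne_zero hF (pow_ne_zero _ hA)) (pow_ne_zero _ hh)) hP1
    have hden2 : (((k' : LaurentSeries ℚ) + 1) * ((k'.factorial : ℕ) : LaurentSeries ℚ)
        * ((a : ℕ) : LaurentSeries ℚ) ^ (k' + 1) * hbar ^ (k' + 1) * (P1 * R)) ≠ 0 :=
      mul_ne_zero (mul_ne_zero (mul_ne_zero (mul_ne_zero hk1 hF) (pow_ne_zero _ hA))
        (pow_ne_zero _ hh)) (mul_ne_zero hP1 hR)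
    ring

  · rw [coeff_Z_not_dvd a (n + 1) hdvd, mul_zero, mul_zero, add_zero]
    split_ifs with hle
    · have hnd : ¬ a ∣ (n - (a - 1)) := by
        rintro ⟨t, ht⟩
        exact hdvd ⟨t + 1, by rw [Nat.mul_add, Nat.mul_one]; omega⟩
      exact coeff_Z_not_dvd a _ hnd
    · rfl
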